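/- For p an odd prime, the point Q = (-T, T^2) on the elliptic curve E_T : y^2 = x^3 + T x^2 - T^3 x over F_p(T) has infinite order in the Mordell–Weil group E_T(F_p(T)). -/

import Mathlib

open Polynomial WeierstrassCurve.Affine

open Classical

/-- An element of `𝔽_p(T)` whose square is a polynomial of odd degree cannot exist. -/
private lemma aux_not_square (p : ℕ) [Fact p.Prime] (q : (ZMod p)[X]) (hq : Odd q.natDegree)
    (x : RatFunc (ZMod p)) : x ^ 2 ≠ algebraMap ((ZMod p)[X]) _ q := by
  intro h
  have hq0 : q ≠ 0 := by rintro rfl; simp at hq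
  have hx : x ≠ 0 := by
    rintro rfl
    rw [eq_comm, zero_pow (by norm_num), map_eq_zero_iff _
      (IsFractionRing.injective ((ZMod p)[X]) (RatFunc (ZMod p)))] at h
    exact hq0 h
  have h1 : (x ^ 2).intDegree = 2 * x.intDegree := by
    rw [sq, RatFunc.intDegree_mul hx hx, two_mul]
  rw [h, RatFunc.intDegree_polynomial] at h1
  exact Int.not_odd_iff_even.mpr (h1 ▸ even_two_mul x.intDegree) (by exact_mod_cast hq)

/-- No polynomial solution to `(f² + X³)² = -4Xf(f² + Xf - X³)`. -/
private lemma aux_polyC {K : Type*} [Field K] (f : K[X]) :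
    (f ^ 2 + X ^ 3) ^ 2 ≠ -(4 * X * f * (f ^ 2 + X * f - X ^ 3)) := by
  intro hEq
  have hS : (f ^ 2 + X * f - X ^ 3).natDegree ≤ max (max (2 * f.natDegree) (1 + f.natDegree)) 3 := by
    refine (natDegree_sub_le _ _).trans ?_
    gcongr
    · exact (natDegree_add_le _ _).trans (by
        gcongr
        · exact (natDegree_pow f 2).le
        · exact (natDegree_mul_le).trans (by simp))
    · simp
  rcases le_or_gt f.natDegree 1 with hd | hd
  · -- low degree case : compare coeff 6
    have hf2 : (f ^ 2).natDegree < 3 := by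
      have := natDegree_pow f 2
      omega
    have hg : (f ^ 2 + X ^ 3).natDegree = 3 := by
      rw [natDegree_add_eq_right_of_natDegree_lt (by simpa using hf2), natDegree_X_pow]
    have hglc : (f ^ 2 + X ^ 3).leadingCoeff = 1 := by
      rw [leadingCoeff, hg, coeff_add, coeff_eq_zero_of_natDegree_lt hf2, coeff_X_pow]
      simp
    have hL : ((f ^ 2 + X ^ 3) ^ 2).coeff 6 = 1 := by
      have := coeff_pow_mul_natDegree (f ^ 2 + X ^ 3) 2
      rw [hg, hglc] at this
      norm_num at this
      exact this
    have hR : (-(4 * X * f * (f ^ 2 + X * f - X ^ 3))).natDegree < 6 := by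
      rw [natDegree_neg]
      calc (4 * X * f * (f ^ 2 + X * f - X ^ 3)).natDegree
          ≤ (4 * X * f).natDegree + (f ^ 2 + X * f - X ^ 3).natDegree := natDegree_mul_le
        _ ≤ ((4 * X).natDegree + f.natDegree) + (f ^ 2 + X * f - X ^ 3).natDegree := by
            gcongr; exact natDegree_mul_le
        _ < 6 := by
            have h4X : (4 * (X : K[X])).natDegree ≤ 1 := natDegree_mul_le.trans (by simp)
            have := hS
            omega
    have := congrArg (fun q => coeff q 6) hEq
    simp only [hL] at this
    rw [coeff_eq_zero_of_natDegree_lt hR] at this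
    exact one_ne_zero this
  · -- high degree case : compare coeff (4d)
    have hf0 : f ≠ 0 := by
      intro h
      rw [h] at hd
      simp at hd
    have hflc : f.leadingCoeff ≠ 0 := leadingCoeff_ne_zero.mpr hf0
    have hg : (f ^ 2 + X ^ 3).natDegree = 2 * f.natDegree := by
      rw [natDegree_add_eq_left_of_natDegree_lt
        (by simp only [natDegree_pow, natDegree_X]; omega), natDegree_pow]
    have hglc : (f ^ 2 + X ^ 3).leadingCoeff = f.leadingCoeff ^ 2 := by
      rw [leadingCoeff, hg, coeff_add, coeff_X_pow, if_neg (by omega)]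
      rw [add_zero]
      exact coeff_pow_mul_natDegree f 2
    have hL : ((f ^ 2 + X ^ 3) ^ 2).coeff (4 * f.natDegree) = f.leadingCoeff ^ 4 := by
      have := coeff_pow_mul_natDegree (f ^ 2 + X ^ 3) 2
      rw [hg, hglc] at this
      rw [show 4 * f.natDegree = 2 * (2 * f.natDegree) by ring, this]
      ring
    have hR : (-(4 * X * f * (f ^ 2 + X * f - X ^ 3))).natDegree < 4 * f.natDegree := by
      rw [natDegree_neg]
      calc (4 * X * f * (f ^ 2 + X * f - X ^ 3)).natDegree
          ≤ (4 * X * f).natDegree + (f ^ 2 + X * f - X ^ 3).natDegree := natDegree_mul_le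
        _ ≤ ((4 * X).natDegree + f.natDegree) + (f ^ 2 + X * f - X ^ 3).natDegree := by
            gcongr; exact natDegree_mul_le
        _ < 4 * f.natDegree := by
            have h4X : (4 * (X : K[X])).natDegree ≤ 1 := natDegree_mul_le.trans (by simp)
            have := hS
            omega
    have := congrArg (fun q => coeff q (4 * f.natDegree)) hEq
    simp only [hL] at this
    rw [coeff_eq_zero_of_natDegree_lt hR] at this
    exact pow_ne_zero 4 hflc this

/-- No polynomial solution to `(f² + X³)² = 4X²f(f² + Xf - X³)`. -/
private lemma aux_polyD {K : Type*} [Field K] (f : K[X]) :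
    (f ^ 2 + X ^ 3) ^ 2 ≠ 4 * X ^ 2 * f * (f ^ 2 + X * f - X ^ 3) := by
  intro h1
  have e1 : f.eval 0 = 0 := by
    have := congrArg (eval 0) h1
    simp only [eval_pow, eval_add, eval_mul, eval_sub, eval_X, eval_ofNat] at this
    simpa using this
  obtain ⟨g, rfl⟩ := X_dvd_iff.mpr (coeff_zero_eq_eval_zero f ▸ e1)
  have h2 : (g ^ 2 + X) ^ 2 = 4 * X * g * (g ^ 2 + g - X) := by
    have key : X ^ 4 * ((g ^ 2 + X) ^ 2) = X ^ 4 * (4 * X * g * (g ^ 2 + g - X)) := by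
      linear_combination h1
    exact mul_left_cancel₀ (pow_ne_zero 4 X_ne_zero) key
  have e2 : g.eval 0 = 0 := by
    have := congrArg (eval 0) h2
    simp only [eval_pow, eval_add, eval_mul, eval_sub, eval_X, eval_ofNat] at this
    simpa using this
  obtain ⟨k, rfl⟩ := X_dvd_iff.mpr (coeff_zero_eq_eval_zero g ▸ e2)
  have h3 : (X * k ^ 2 + 1) ^ 2 = 4 * X * k * (X * k ^ 2 + k - 1) := by
    have key : X ^ 2 * ((X * k ^ 2 + 1) ^ 2) = X ^ 2 * (4 * X * k * (X * k ^ 2 + k - 1)) := by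
      linear_combination h2
    exact mul_left_cancel₀ (pow_ne_zero 2 X_ne_zero) key
  have := congrArg (eval 0) h3
  simp only [eval_pow, eval_add, eval_mul, eval_sub, eval_X, eval_one, eval_ofNat] at this
  simp at this

/-- Key doubling relation: if `2•(x, y)` has `x`-coordinate `v`, then
`(x² + T³)² = 4v·x(x² + Tx - T³)`. -/
private lemma aux_double_key (p : ℕ) [Fact p.Prime]
    (W : WeierstrassCurve.Affine (RatFunc (ZMod p)))
    (hW : W = { a₁ := 0, a₂ := RatFunc.X, a₃ := 0, a₄ := -RatFunc.X ^ 3, a₆ := 0 })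
    {x y : RatFunc (ZMod p)} (h : W.Nonsingular x y) (hy : y ≠ W.negY x y)
    {v : RatFunc (ZMod p)} (hv : W.addX x x (W.slope x x y y) = v) :
    (x ^ 2 + RatFunc.X ^ 3) ^ 2
      = 4 * v * (x * (x ^ 2 + RatFunc.X * x - RatFunc.X ^ 3)) := by
  subst hW
  set t : RatFunc (ZMod p) := RatFunc.X with ht
  have heq : y ^ 2 = x ^ 3 + t * x ^ 2 - t ^ 3 * x := by
    have := h.1
    rw [equation_iff] at this
    linear_combination this
  rw [slope_of_Y_ne rfl hy] at hv
  simp only [negY] at hy hv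
  simp only [addX] at hv
  have hy' : y ≠ -y := by simpa using hy
  have hyy : y + y ≠ 0 := fun h0 => hy' (eq_neg_of_add_eq_zero_left h0)
  ring_nf at hv
  have hv2 : ((3 * x ^ 2 + 2 * t * x + -t ^ 3) / (y + y)) ^ 2
      = v + t + x + x := by linear_combination hv
  rw [div_pow, div_eq_iff (by simpa using pow_ne_zero 2 hyy)] at hv2
  linear_combination hv2 + 4 * (v + t + 2*x) * heq

/-- Integrality: a rational-function solution of the key relation gives a polynomial one. -/
private lemma aux_to_poly (p : ℕ) [Fact p.Prime] (x : RatFunc (ZMod p)) (c : (ZMod p)[X])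
    (hkey : (x ^ 2 + RatFunc.X ^ 3) ^ 2 = 4 * (algebraMap ((ZMod p)[X]) (RatFunc (ZMod p)) c) *
      (x * (x ^ 2 + RatFunc.X * x - RatFunc.X ^ 3))) :
    ∃ f : (ZMod p)[X], (f ^ 2 + X ^ 3) ^ 2 = 4 * c * (f * (f ^ 2 + X * f - X ^ 3)) := by
  set A := algebraMap ((ZMod p)[X]) (RatFunc (ZMod p)) with hA
  have hX : A X = RatFunc.X := RatFunc.algebraMap_X
  have hint : IsIntegral ((ZMod p)[X]) x := by
    refine ⟨X ^ 4 + C (-4 * c) * X ^ 3 + C (2 * X ^ 3 - 4 * c * X) * X ^ 2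
      + C (4 * c * X ^ 3) * X + C (X ^ 6), ?_, ?_⟩
    · monicity!
    · simp only [eval₂_add, eval₂_mul, eval₂_pow, eval₂_X, eval₂_C]
      simp only [map_mul, map_add, map_sub, map_pow, map_neg, map_ofNat, hX, ← hA]
      linear_combination hkey
  obtain ⟨f, hf⟩ := IsIntegrallyClosed.isIntegral_iff.mp hint
  refine ⟨f, IsFractionRing.injective ((ZMod p)[X]) (RatFunc (ZMod p)) ?_⟩
  have hfx : A f = x := hf
  simp only [map_pow, map_add, map_mul, map_sub, map_ofNat, ← hA, hfx, hX]
  exact hkey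

/-- Claim A: no point doubles to a point with `x`-coordinate `0`. -/
private lemma aux_claimA (p : ℕ) [Fact p.Prime]
    (W : WeierstrassCurve.Affine (RatFunc (ZMod p)))
    (hW : W = { a₁ := 0, a₂ := RatFunc.X, a₃ := 0, a₄ := -RatFunc.X ^ 3, a₆ := 0 })
    (x y : RatFunc (ZMod p)) (h : W.Nonsingular x y) (hy : y ≠ W.negY x y) :
    W.addX x x (W.slope x x y y) ≠ 0 := by
  intro hv
  have key := aux_double_key p W hW h hy hv
  have h0 : (x ^ 2 + RatFunc.X ^ 3) ^ 2 = 0 := by linear_combination key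
  have h1 : x ^ 2 = algebraMap ((ZMod p)[X]) (RatFunc (ZMod p)) (-X ^ 3) := by
    rw [map_neg, map_pow, RatFunc.algebraMap_X]
    have := pow_eq_zero_iff (two_ne_zero) |>.mp h0
    linear_combination this
  exact aux_not_square p (-X ^ 3) (by rw [natDegree_neg, natDegree_X_pow]; decide) x h1

/-- Claim C: no point doubles to a point with `x`-coordinate `-T`. -/
private lemma aux_claimC (p : ℕ) [Fact p.Prime]
    (W : WeierstrassCurve.Affine (RatFunc (ZMod p)))
    (hW : W = { a₁ := 0, a₂ := RatFunc.X, a₃ := 0, a₄ := -RatFunc.X ^ 3, a₆ := 0 })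
    (x y : RatFunc (ZMod p)) (h : W.Nonsingular x y) (hy : y ≠ W.negY x y) :
    W.addX x x (W.slope x x y y) ≠ -RatFunc.X := by
  intro hv
  have key := aux_double_key p W hW h hy hv
  have hkey : (x ^ 2 + RatFunc.X ^ 3) ^ 2
      = 4 * (algebraMap ((ZMod p)[X]) (RatFunc (ZMod p)) (-X)) *
        (x * (x ^ 2 + RatFunc.X * x - RatFunc.X ^ 3)) := by
    rw [map_neg, RatFunc.algebraMap_X]
    exact key
  obtain ⟨f, hf⟩ := aux_to_poly p x (-X) hkey
  exact aux_polyC f (by linear_combination hf)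

/-- Claim D: no point doubles to a point with `x`-coordinate `T²`. -/
private lemma aux_claimD (p : ℕ) [Fact p.Prime]
    (W : WeierstrassCurve.Affine (RatFunc (ZMod p)))
    (hW : W = { a₁ := 0, a₂ := RatFunc.X, a₃ := 0, a₄ := -RatFunc.X ^ 3, a₆ := 0 })
    (x y : RatFunc (ZMod p)) (h : W.Nonsingular x y) (hy : y ≠ W.negY x y) :
    W.addX x x (W.slope x x y y) ≠ RatFunc.X ^ 2 := by
  intro hv
  have key := aux_double_key p W hW h hy hv
  have hkey : (x ^ 2 + RatFunc.X ^ 3) ^ 2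
      = 4 * (algebraMap ((ZMod p)[X]) (RatFunc (ZMod p)) (X ^ 2)) *
        (x * (x ^ 2 + RatFunc.X * x - RatFunc.X ^ 3)) := by
    rw [map_pow, RatFunc.algebraMap_X]
    exact key
  obtain ⟨f, hf⟩ := aux_to_poly p x (X ^ 2) hkey
  exact aux_polyD f (by linear_combination hf)

/-- A point `P` cannot satisfy `P + P = some h₃` if the `x`-coordinate is forbidden. -/
private lemma aux_double_ne {F : Type*} [Field F] {W : WeierstrassCurve.Affine F}
    {x₃ y₃ : F} (h₃ : W.Nonsingular x₃ y₃)
    (HX : ∀ x y : F, W.Nonsingular x y → y ≠ W.negY x y →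
      W.addX x x (W.slope x x y y) ≠ x₃) :
    ∀ P : W.Point, P + P ≠ WeierstrassCurve.Affine.Point.some _ _ h₃ := by
  rintro (_ | @⟨x, y, hxy⟩) heq
  · exact Point.some_ne_zero h₃ ((zero_add (0 : W.Point)) ▸ heq).symm
  · by_cases hy : y = W.negY x y
    · rw [Point.add_self_of_Y_eq hy] at heq
      exact Point.some_ne_zero h₃ heq.symm
    · rw [Point.add_self_of_Y_ne hy] at heq
      injection heq with hx _
      exact HX x y hxy hy hx

/-- the only 2-torsion point is `(0, 0)`. -/
private lemma aux_two_torsion (p : ℕ) [Fact p.Prime] (hp : p ≠ 2)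
    (W : WeierstrassCurve.Affine (RatFunc (ZMod p)))
    (hW : W = { a₁ := 0, a₂ := RatFunc.X, a₃ := 0, a₄ := -RatFunc.X ^ 3, a₆ := 0 })
    {x y : RatFunc (ZMod p)} (h : W.Nonsingular x y)
    (hsum : WeierstrassCurve.Affine.Point.some _ _ h + WeierstrassCurve.Affine.Point.some _ _ h = 0) :
    x = 0 ∧ y = 0 := by
  have h2K : (2 : ZMod p) ≠ 0 := by
    intro h2
    have : ((2 : ℕ) : ZMod p) = 0 := by exact_mod_cast h2
    rw [ZMod.natCast_eq_zero_iff] at this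
    exact hp ((Nat.prime_dvd_prime_iff_eq (Fact.out) Nat.prime_two).mp this)
  have h2F : (2 : RatFunc (ZMod p)) ≠ 0 := by
    intro h2
    have h2' : (algebraMap ((ZMod p)[X]) (RatFunc (ZMod p))) 2 = 0 := by
      rw [map_ofNat]; exact h2
    rw [map_eq_zero_iff _ (IsFractionRing.injective ((ZMod p)[X]) (RatFunc (ZMod p)))] at h2'
    have := congrArg (eval 0) h2'
    simp at this
    exact h2K this
  by_cases hy : y = W.negY x y
  · -- y = -y, so y = 0 and x(x² + Tx - T³) = 0
    have hy0 : y = 0 := by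
      rw [hW] at hy
      simp only [negY] at hy
      have : 2 * y = 0 := by linear_combination hy
      rcases mul_eq_zero.mp this with h' | h'
      · exact absurd h' h2F
      · exact h'
    have heq : x * (x ^ 2 + RatFunc.X * x - RatFunc.X ^ 3) = 0 := by
      have := h.1
      rw [hW, equation_iff] at this
      rw [hy0] at this
      linear_combination -this
    rcases mul_eq_zero.mp heq with hx0 | hx2
    · exact ⟨hx0, hy0⟩
    · -- x² + Tx - T³ = 0 impossible
      exfalso
      set t : RatFunc (ZMod p) := RatFunc.X with ht
      have htne : t ≠ 0 := RatFunc.X_ne_zero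
      have hz : ((2 * x + t) / t) ^ 2
          = algebraMap ((ZMod p)[X]) (RatFunc (ZMod p)) (C 4 * X + C 1) := by
        simp only [map_add, map_mul, RatFunc.algebraMap_C, RatFunc.algebraMap_X, map_ofNat,
          map_one]
        rw [div_pow, div_eq_iff (pow_ne_zero 2 htne)]
        linear_combination 4 * hx2
      refine aux_not_square p (C 4 * X + C 1) ?_ _ hz
      rw [natDegree_linear (by
        intro h4
        apply h2K
        have : (4 : ZMod p) = 2 * 2 := by norm_num
        rcases mul_eq_zero.mp (this ▸ h4) with h' | h' <;> exact h')]
      decide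
  · rw [Point.add_self_of_Y_ne hy] at hsum
    exact absurd hsum (Point.some_ne_zero _)

/-- For `p` an odd prime, the point `Q = (-T, T²)` on the elliptic curve
`E_T : y² = x³ + T x² - T³ x` over `𝔽_p(T)` has infinite order in the Mordell–Weil group
`E_T(𝔽_p(T))`. -/
theorem Q_infinite_order (p : ℕ) [Fact p.Prime] (hp : p ≠ 2)
    (W : WeierstrassCurve.Affine (RatFunc (ZMod p)))
    (hW : W = { a₁ := 0, a₂ := RatFunc.X, a₃ := 0, a₄ := -RatFunc.X ^ 3, a₆ := 0 })
    (h : WeierstrassCurve.Affine.Nonsingular W (-RatFunc.X) (RatFunc.X ^ 2)) :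
    addOrderOf (WeierstrassCurve.Affine.Point.some _ _ h) = 0 := by
  by_contra hn
  set Q : W.Point := WeierstrassCurve.Affine.Point.some _ _ h with hQdef
  set n := addOrderOf Q with hndef
  have hnpos : 0 < n := Nat.pos_of_ne_zero hn
  have hQn : n • Q = 0 := addOrderOf_nsmul_eq_zero Q
  rcases Nat.even_or_odd n with ⟨m, hm⟩ | ⟨k, hk⟩
  · -- n = m + m even
    have hmpos : 0 < m := by omega
    have hQm : m • Q ≠ 0 := nsmul_ne_zero_of_lt_addOrderOf (by omega) (by omega)
    have h2Qm : m • Q + m • Q = 0 := by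
      rw [← add_nsmul, ← hm]; exact hQn
    rcases hP : m • Q with _ | @⟨x₂, y₂, h₂⟩
    · exact hQm (hP.trans (Point.zero_def (W' := W)))
    · rw [hP] at h2Qm
      obtain ⟨hx₂, hy₂⟩ := aux_two_torsion p hp W hW h₂ h2Qm
      subst hx₂ hy₂
      rcases Nat.even_or_odd m with ⟨l, hl⟩ | ⟨l, hl⟩
      · -- m = l + l : then (l•Q) + (l•Q) = m•Q = (0,0), contradicting claim A
        have hdouble : l • Q + l • Q = WeierstrassCurve.Affine.Point.some _ _ h₂ := by
          rw [← add_nsmul, ← hl]; exact hP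
        exact aux_double_ne h₂ (fun x y hN hy => aux_claimA p W hW x y hN hy) (l • Q) hdouble
      · -- m = 2l + 1 odd : R = Q + (0,0) = (m+1)•Q  is a double, contradicting claim D
        have hxne : -RatFunc.X ≠ (0 : RatFunc (ZMod p)) :=
          neg_ne_zero.mpr RatFunc.X_ne_zero
        have hR : Q + WeierstrassCurve.Affine.Point.some _ _ h₂
            = WeierstrassCurve.Affine.Point.some _ _
              (nonsingular_add h h₂ (fun h' => absurd h'.1 hxne)) :=
          Point.add_of_X_ne hxne
        have hxR : W.addX (-RatFunc.X) 0
            (W.slope (-RatFunc.X) 0 (RatFunc.X ^ 2) 0) = RatFunc.X ^ 2 := by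
          have hslope : W.slope (-RatFunc.X) 0 (RatFunc.X ^ 2) 0 = -RatFunc.X := by
            rw [slope_of_X_ne hxne, div_eq_iff (by simpa using hxne)]
            ring
          rw [hslope, addX, hW]
          simp only []
          ring
        have hsum : (l + 1) • Q + (l + 1) • Q = WeierstrassCurve.Affine.Point.some _ _
            (nonsingular_add h h₂ (fun h' => absurd h'.1 hxne)) := by
          rw [← add_nsmul, show l + 1 + (l + 1) = 1 + m by omega, add_nsmul, one_nsmul, hP]
          exact hR
        refine aux_double_ne _ (fun x y hN hy hadd => ?_) ((l + 1) • Q) hsum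
        rw [hxR] at hadd
        exact aux_claimD p W hW x y hN hy hadd
  · -- n = 2k + 1 odd : Q = (n+1)•Q is a double, contradicting claim C
    have hsum : (k + 1) • Q + (k + 1) • Q = WeierstrassCurve.Affine.Point.some _ _ h := by
      rw [← add_nsmul, show k + 1 + (k + 1) = n + 1 by omega, add_nsmul, one_nsmul, hQn,
        zero_add]
    exact aux_double_ne h (fun x y hN hy => aux_claimC p W hW x y hN hy) ((k + 1) • Q) hsum
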